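/- Let $f:[0,1]\to\mathbb{R}$ be differentiable with $f(0)\ge 0$, $f(t)\ge 0$, and suppose $f'(t) \le c(f(t)^{1/2} + f(t))$ for all $t\in[0,1]$, where $c>0$. Then for all $t\in[0,1]$, $f(t) \le \left(-1 + (1+f(0)^{1/2})e^{ct/2}\right)^2$. -/

import Mathlib

/-- ODE comparison: a nonnegative differentiable subsolution of
`f' = c (√f + f)` on `[0,1]` is bounded by the explicit solution
`(-1 + (1 + √f(0)) e^{ct/2})²`. -/
theorem stmt0 (c : ℝ) (hc : 0 < c) (f : ℝ → ℝ)
    (hdiff : ∀ t ∈ Set.Icc (0:ℝ) 1, DifferentiableAt ℝ f t)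
    (h0 : 0 ≤ f 0)
    (hnn : ∀ t ∈ Set.Icc (0:ℝ) 1, 0 ≤ f t)
    (hder : ∀ t ∈ Set.Icc (0:ℝ) 1, deriv f t ≤ c * (Real.sqrt (f t) + f t)) :
    ∀ t ∈ Set.Icc (0:ℝ) 1,
      f t ≤ (-1 + (1 + Real.sqrt (f 0)) * Real.exp (c * t / 2)) ^ 2 := by
  intro t ht
  have hs0 : (0:ℝ) ≤ Real.sqrt (f 0) := Real.sqrt_nonneg _
  have key : ∀ ε > (0:ℝ),
      f t ≤ (-1 + (1 + Real.sqrt (f 0) + ε) * Real.exp ((c + ε) * t / 2)) ^ 2 := by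
    intro ε hε
    set A : ℝ := 1 + Real.sqrt (f 0) + ε with hAdef
    set k : ℝ := c + ε with hkdef
    have hA : 1 < A := by simp only [hAdef]; linarith
    have hk : 0 < k := by simp only [hkdef]; linarith
    set B : ℝ → ℝ := fun x => (-1 + A * Real.exp (k * x / 2)) ^ 2 with hBdef
    set B' : ℝ → ℝ := fun x =>
      k * (-1 + A * Real.exp (k * x / 2)) * (A * Real.exp (k * x / 2)) with hB'def
    have hBderiv : ∀ x, HasDerivAt B (B' x) x := by
      intro x
      have h1 : HasDerivAt (fun x : ℝ => -1 + A * Real.exp (k * x / 2))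
          (A * (Real.exp (k * x / 2) * (k / 2))) x := by
        have : HasDerivAt (fun x : ℝ => k * x / 2) (k / 2) x := by
          simpa using ((hasDerivAt_id x).const_mul k).div_const 2
        exact ((this.exp).const_mul A).const_add (-1)
      have h2 := h1.pow 2
      refine h2.congr_deriv ?_
      simp only [hB'def]
      ring
    have hcont : ContinuousOn f (Set.Icc 0 1) := fun x hx =>
      (hdiff x hx).continuousAt.continuousWithinAt
    have hf' : ∀ x ∈ Set.Ico (0:ℝ) 1, HasDerivWithinAt f (deriv f x) (Set.Ici x) x := by
      intro x hx
      exact ((hdiff x ⟨hx.1, hx.2.le⟩).hasDerivAt).hasDerivWithinAt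
    have ha : f 0 ≤ B 0 := by
      have hsq : Real.sqrt (f 0) ^ 2 = f 0 := Real.sq_sqrt h0
      simp only [hBdef, hAdef, mul_zero, zero_div, Real.exp_zero, mul_one]
      nlinarith
    have hspos : ∀ x : ℝ, 0 ≤ x → 0 < -1 + A * Real.exp (k * x / 2) := by
      intro x hx
      have h1 : (1:ℝ) ≤ Real.exp (k * x / 2) := by
        rw [← Real.exp_zero]
        apply Real.exp_le_exp.mpr
        positivity
      nlinarith
    have bound : ∀ x ∈ Set.Ico (0:ℝ) 1, f x = B x → deriv f x < B' x := by
      intro x hx heq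
      set s : ℝ := -1 + A * Real.exp (k * x / 2) with hsdef
      have hs : 0 < s := hspos x hx.1
      have hxm : x ∈ Set.Icc (0:ℝ) 1 := ⟨hx.1, hx.2.le⟩
      have hfx : f x = s ^ 2 := heq
      have hsqrt : Real.sqrt (f x) = s := by
        rw [hfx, Real.sqrt_sq hs.le]
      have h1 : deriv f x ≤ c * (s + s ^ 2) := by
        have := hder x hxm
        rwa [hsqrt, hfx] at this
      have h2 : c * (s + s ^ 2) < k * (s + s ^ 2) := by
        apply mul_lt_mul_of_pos_right _ (by nlinarith)
        simp only [hkdef]; linarith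
      have h3 : k * (s + s ^ 2) = B' x := by
        have : A * Real.exp (k * x / 2) = 1 + s := by simp [hsdef]
        simp only [hB'def, this, ← hsdef]
        ring
      linarith
    have := image_le_of_deriv_right_lt_deriv_boundary hcont hf' ha hBderiv bound ht
    simpa [hBdef, hAdef, hkdef] using this
  -- take the limit ε → 0⁺
  set L : ℝ := (-1 + (1 + Real.sqrt (f 0)) * Real.exp (c * t / 2)) ^ 2
  have hcont : ContinuousAt (fun ε : ℝ =>
      (-1 + (1 + Real.sqrt (f 0) + ε) * Real.exp ((c + ε) * t / 2)) ^ 2) 0 := by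
    fun_prop
  have htend : Filter.Tendsto (fun ε : ℝ =>
      (-1 + (1 + Real.sqrt (f 0) + ε) * Real.exp ((c + ε) * t / 2)) ^ 2)
      (nhdsWithin 0 (Set.Ioi 0)) (nhds L) := by
    have := hcont.continuousWithinAt (s := Set.Ioi (0:ℝ))
    simpa [ContinuousWithinAt, L] using this
  exact ge_of_tendsto htend (eventually_mem_nhdsWithin.mono fun ε hε => key ε hε)
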